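/- Let V be a ℂ-linear subspace of ℂ[X] of finite dimension r+1 such that every element of V has degree at most d. For x ∈ ℂ, let a_0(x) < a_1(x) < ⋯ < a_r(x) be the r+1 distinct orders of vanishing at x of nonzero elements of V, and define the weight w(x) := ∑_{j=0}^{r} (a_j(x) − j). Then w(x) ≥ 0 for every x, w(x) = 0 for all but finitely many x ∈ ℂ, and ∑_{x ∈ ℂ} w(x) ≤ (r+1)d − r(r+1)/2. -/

import Mathlib

open Polynomial Finset Matrix

/- ### Auxiliary lemmas -/

lemma fin_le_of_strictMono_aux {n : ℕ} {f : Fin n → ℕ} (hf : StrictMono f) :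
    ∀ k (h : k < n), k ≤ f ⟨k, h⟩ := by
  intro k
  induction k with
  | zero => intro h; exact Nat.zero_le _
  | succ k ih =>
    intro h
    have hk : k < n := Nat.lt_of_succ_lt h
    have h1 : f ⟨k, hk⟩ < f ⟨k + 1, h⟩ := hf (by simp [Fin.lt_def])
    have h2 := ih hk
    omega

lemma fin_le_of_strictMono {n : ℕ} {f : Fin n → ℕ} (hf : StrictMono f) (j : Fin n) :
    (j : ℕ) ≤ f j := by
  have := fin_le_of_strictMono_aux hf j.val j.isLt
  simpa using this

lemma pow_sub_dvd_iterate_derivative {x : ℂ} {p : Polynomial ℂ} {n : ℕ}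
    (h : (X - C x) ^ n ∣ p) (j : ℕ) :
    (X - C x) ^ (n - j) ∣ derivative^[j] p := by
  induction j generalizing p n with
  | zero => simpa using h
  | succ j ih =>
    obtain ⟨q, rfl⟩ := h
    rw [Function.iterate_succ_apply]
    have key : (X - C x) ^ (n - 1) ∣ derivative ((X - C x) ^ n * q) := by
      rcases n with _ | m
      · simp
      · rw [derivative_mul, derivative_pow]
        simp only [Nat.add_sub_cancel]
        exact dvd_add ⟨C ((m : ℂ) + 1) * derivative (X - C x) * q, by push_cast; ring⟩
          ⟨(X - C x) * derivative q, by rw [pow_succ]; ring⟩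
    have := ih key
    rwa [Nat.sub_sub, Nat.add_comm 1 j, ← Nat.sub_sub] at this

lemma coeff_mul_low {p q : Polynomial ℂ} {A B : ℕ}
    (hp : X ^ A ∣ p) (hq : X ^ B ∣ q) :
    (p * q).coeff (A + B) = p.coeff A * q.coeff B := by
  rw [X_pow_dvd_iff] at hp hq
  rw [coeff_mul]
  refine Finset.sum_eq_single (A, B) (fun ab hab hne => ?_) (fun h => ?_)
  · rw [Finset.HasAntidiagonal.mem_antidiagonal] at hab
    rcases lt_or_ge ab.1 A with h1 | h1
    · rw [hp _ h1, zero_mul]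
    · have : ab.2 < B := by
        rcases lt_or_eq_of_le h1 with h2 | h2
        · omega
        · exfalso; apply hne; ext <;> omega
      rw [hq _ this, mul_zero]
  · simp [Finset.HasAntidiagonal.mem_antidiagonal] at h

lemma prod_pow_dvd_prod' {ι : Type*} (s : Finset ι) (u : Polynomial ℂ)
    (p : ι → Polynomial ℂ) (ℓ : ι → ℕ) (h : ∀ i ∈ s, u ^ (ℓ i) ∣ p i) :
    u ^ (∑ i ∈ s, ℓ i) ∣ ∏ i ∈ s, p i := by
  rw [← Finset.prod_pow_eq_pow_sum]
  exact Finset.prod_dvd_prod_of_dvd (fun i => u ^ ℓ i) p h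

lemma coeff_prod_low {ι : Type*} [DecidableEq ι] (s : Finset ι) (p : ι → Polynomial ℂ)
    (ℓ : ι → ℕ) (h : ∀ i ∈ s, X ^ (ℓ i) ∣ p i) :
    (∏ i ∈ s, p i).coeff (∑ i ∈ s, ℓ i) = ∏ i ∈ s, (p i).coeff (ℓ i) := by
  induction s using Finset.induction with
  | empty => simp
  | insert _ _ hni ih =>
    rename_i i s
    rw [Finset.prod_insert hni, Finset.sum_insert hni, Finset.prod_insert hni,
      coeff_mul_low (h i (Finset.mem_insert_self i s))
        (prod_pow_dvd_prod' s X p ℓ (fun j hj => h j (Finset.mem_insert_of_mem hj))),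
      ih (fun j hj => h j (Finset.mem_insert_of_mem hj))]

lemma linearIndependent_of_strictMono_rootMultiplicity {n : ℕ} (x : ℂ)
    (f : Fin n → Polynomial ℂ) (hne : ∀ j, f j ≠ 0)
    (hsm : StrictMono fun j => (f j).rootMultiplicity x) :
    LinearIndependent ℂ f := by
  rw [Fintype.linearIndependent_iff]
  intro c hc
  by_contra hex
  push_neg at hex
  obtain ⟨i0, hi0, hmin⟩ := Finset.exists_min_image (Finset.univ.filter fun i => c i ≠ 0)
    id (by
      obtain ⟨i, hi⟩ := hex
      exact ⟨i, Finset.mem_filter.mpr ⟨Finset.mem_univ i, hi⟩⟩)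
  rw [Finset.mem_filter] at hi0
  have hc0 : C (c i0) * f i0 = -∑ j ∈ Finset.univ.erase i0, c j • f j := by
    have := hc
    rw [← Finset.add_sum_erase _ _ (Finset.mem_univ i0)] at this
    rw [smul_eq_C_mul] at this
    linear_combination this
  have hdvd : (X - C x) ^ ((f i0).rootMultiplicity x + 1) ∣ C (c i0) * f i0 := by
    rw [hc0, dvd_neg]
    refine Finset.dvd_sum fun j hj => ?_
    rcases eq_or_ne (c j) 0 with h | h
    · simp [h]
    · have hji : i0 ≤ j := by
        have := hmin j (Finset.mem_filter.mpr ⟨Finset.mem_univ j, h⟩)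
        exact this
      have hji' : i0 < j := lt_of_le_of_ne hji (by
        rintro rfl; exact (Finset.mem_erase.mp hj).1 rfl)
      have : (f i0).rootMultiplicity x + 1 ≤ (f j).rootMultiplicity x :=
        Nat.succ_le_of_lt (hsm hji')
      have hd : (X - C x) ^ ((f i0).rootMultiplicity x + 1) ∣ f j :=
        dvd_trans (pow_dvd_pow _ this) (pow_rootMultiplicity_dvd _ x)
      rw [smul_eq_C_mul]
      exact hd.mul_left _
  have : (X - C x) ^ ((f i0).rootMultiplicity x + 1) ∣ f i0 := by
    have hu : IsUnit (C (c i0)) := isUnit_C.mpr (hi0.2.isUnit)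
    exact (hu.dvd_mul_left).mp hdvd
  exact pow_rootMultiplicity_not_dvd (hne i0) x this

/- ### Wronskian matrix -/

noncomputable def wmat {n : ℕ} (G : Fin n → Polynomial ℂ) :
    Matrix (Fin n) (Fin n) (Polynomial ℂ) :=
  Matrix.of fun i j => derivative^[(i : ℕ)] (G j)

lemma pow_dvd_det_wmat {n : ℕ} (x : ℂ) (G : Fin n → Polynomial ℂ) (m : Fin n → ℕ)
    (hm : ∀ i : Fin n, (i : ℕ) ≤ m i)
    (hdvd : ∀ i : Fin n, (X - C x) ^ (m i) ∣ G i) :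
    (X - C x) ^ (∑ i : Fin n, (m i - (i : ℕ))) ∣ (wmat G).det := by
  rw [Matrix.det_apply']
  refine Finset.dvd_sum fun σ _ => Dvd.dvd.mul_left ?_ _
  have hterm : ∀ i : Fin n, (X - C x) ^ (m i - (σ i : ℕ)) ∣ wmat G (σ i) i :=
    fun i => pow_sub_dvd_iterate_derivative (hdvd i) _
  have hprod : (X - C x) ^ (∑ i : Fin n, (m i - (σ i : ℕ))) ∣ ∏ i : Fin n, wmat G (σ i) i :=
    prod_pow_dvd_prod' _ _ _ _ (fun i _ => hterm i)
  refine dvd_trans (pow_dvd_pow _ ?_) hprod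
  rw [← Nat.cast_le (α := ℤ), Nat.cast_sum, Nat.cast_sum]
  have e1 : ∑ i : Fin n, ((m i - (i : ℕ) : ℕ) : ℤ) = ∑ i : Fin n, ((m i : ℤ) - (i : ℕ)) :=
    Finset.sum_congr rfl fun i _ => by have := hm i; omega
  have e2 : ∑ i : Fin n, (((σ i : ℕ) : ℤ)) = ∑ i : Fin n, ((i : ℕ) : ℤ) :=
    Equiv.sum_comp σ (fun i : Fin n => ((i : ℕ) : ℤ))
  have e3 : ∀ i : Fin n, ((m i : ℤ) - (σ i : ℕ)) ≤ ((m i - (σ i : ℕ) : ℕ) : ℤ) :=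
    fun i => by omega
  calc ∑ i : Fin n, ((m i - (i : ℕ) : ℕ) : ℤ)
      = ∑ i : Fin n, ((m i : ℤ) - (σ i : ℕ)) := by
        rw [e1, Finset.sum_sub_distrib, Finset.sum_sub_distrib, e2]
    _ ≤ ∑ i : Fin n, ((m i - (σ i : ℕ) : ℕ) : ℤ) := Finset.sum_le_sum fun i _ => e3 i

lemma wmat_factor {n : ℕ} (G H : Fin n → Polynomial ℂ) (c : Matrix (Fin n) (Fin n) ℂ)
    (hG : ∀ j, G j = ∑ k : Fin n, c j k • H k) :
    (wmat G).det = (wmat H).det * Polynomial.C c.det := by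
  have hmat : wmat G = wmat H * (c.map Polynomial.C)ᵀ := by
    apply Matrix.ext
    intro i j
    simp only [wmat, Matrix.of_apply, Matrix.mul_apply, Matrix.transpose_apply,
      Matrix.map_apply]
    rw [hG j, iterate_derivative_sum]
    refine Finset.sum_congr rfl fun k _ => ?_
    rw [iterate_derivative_smul, smul_eq_C_mul]
    ring
  rw [hmat, Matrix.det_mul, Matrix.det_transpose]
  congr 1
  exact (RingHom.map_det Polynomial.C c).symm

lemma det_wmat_ne_zero {n : ℕ} (g : Fin n → Polynomial ℂ) (a : Fin n → ℕ)
    (hsm : StrictMono a) (hne : ∀ j, g j ≠ 0)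
    (hrm : ∀ j, (g j).rootMultiplicity 0 = a j) :
    (wmat g).det ≠ 0 := by
  classical
  have hXC : (X - C (0 : ℂ)) = (X : Polynomial ℂ) := by simp
  have hlow : ∀ j, (X : Polynomial ℂ) ^ (a j) ∣ g j := fun j => by
    rw [← hXC, ← hrm j]; exact pow_rootMultiplicity_dvd _ _
  have hcne : ∀ j, (g j).coeff (a j) ≠ 0 := by
    intro j hc
    apply pow_rootMultiplicity_not_dvd (hne j) (0 : ℂ)
    rw [hrm j, hXC, X_pow_dvd_iff]
    intro d hd
    rcases Nat.lt_succ_iff_lt_or_eq.mp hd with h | rfl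
    · exact (X_pow_dvd_iff.mp (hlow j)) d h
    · exact hc
  have hja : ∀ j : Fin n, (j : ℕ) ≤ a j := fin_le_of_strictMono hsm
  set w : ℕ := ∑ j : Fin n, (a j - (j : ℕ)) with hw
  have hperm : ∀ σ : Equiv.Perm (Fin n),
      (∏ i : Fin n, wmat g (σ i) i).coeff w
        = ∏ i : Fin n, ((g i).coeff (a i) * ((a i).descFactorial (σ i : ℕ) : ℂ)) := by
    intro σ
    by_cases hcase : ∀ i : Fin n, (σ i : ℕ) ≤ a i
    · have hsum : ∑ i : Fin n, (a i - (σ i : ℕ)) = w := by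
        rw [hw, ← Nat.cast_inj (R := ℤ), Nat.cast_sum, Nat.cast_sum]
        have e2 : ∑ i : Fin n, (((σ i : ℕ) : ℤ)) = ∑ i : Fin n, ((i : ℕ) : ℤ) :=
          Equiv.sum_comp σ (fun i : Fin n => ((i : ℕ) : ℤ))
        have l : ∑ i : Fin n, ((a i - (σ i : ℕ) : ℕ) : ℤ)
            = ∑ i : Fin n, ((a i : ℤ) - ((σ i : ℕ) : ℤ)) :=
          Finset.sum_congr rfl fun i _ => by have := hcase i; omega
        have r : ∑ i : Fin n, ((a i - (i : ℕ) : ℕ) : ℤ)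
            = ∑ i : Fin n, ((a i : ℤ) - ((i : ℕ) : ℤ)) :=
          Finset.sum_congr rfl fun i _ => by have := hja i; omega
        rw [l, r, Finset.sum_sub_distrib, Finset.sum_sub_distrib, e2]
      have hdvd : ∀ i : Fin n, (X : Polynomial ℂ) ^ (a i - (σ i : ℕ)) ∣ wmat g (σ i) i := by
        intro i
        rw [← hXC]
        exact pow_sub_dvd_iterate_derivative (by rw [hXC]; exact hlow i) _
      rw [← hsum, coeff_prod_low _ _ _ (fun i _ => hdvd i)]
      refine Finset.prod_congr rfl fun i _ => ?_
      show (derivative^[(σ i : ℕ)] (g i)).coeff (a i - (σ i : ℕ)) = _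
      rw [coeff_iterate_derivative]
      have : a i - (σ i : ℕ) + (σ i : ℕ) = a i := Nat.sub_add_cancel (hcase i)
      rw [this, nsmul_eq_mul, mul_comm]
    · push_neg at hcase
      obtain ⟨i0, hi0⟩ := hcase
      have hrhs : ((a i0).descFactorial (σ i0 : ℕ) : ℂ) = 0 := by
        rw [Nat.descFactorial_eq_zero_iff_lt.mpr hi0, Nat.cast_zero]
      have hzero : (∏ i : Fin n, wmat g (σ i) i).coeff w = 0 := by
        have hdvd : (X : Polynomial ℂ) ^ (∑ i : Fin n, (a i - (σ i : ℕ)))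
            ∣ ∏ i : Fin n, wmat g (σ i) i := by
          refine prod_pow_dvd_prod' _ _ _ _ fun i _ => ?_
          rw [← hXC]
          exact pow_sub_dvd_iterate_derivative (by rw [hXC]; exact hlow i) _
        have hgt : w < ∑ i : Fin n, (a i - (σ i : ℕ)) := by
          rw [hw, ← Nat.cast_lt (α := ℤ), Nat.cast_sum, Nat.cast_sum]
          have e2 : ∑ i : Fin n, (((σ i : ℕ) : ℤ)) = ∑ i : Fin n, ((i : ℕ) : ℤ) :=
            Equiv.sum_comp σ (fun i : Fin n => ((i : ℕ) : ℤ))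
          have r : ∑ i : Fin n, ((a i - (i : ℕ) : ℕ) : ℤ)
              = ∑ i : Fin n, ((a i : ℤ) - ((i : ℕ) : ℤ)) :=
            Finset.sum_congr rfl fun i _ => by have := hja i; omega
          have l : ∑ i : Fin n, ((a i : ℤ) - ((σ i : ℕ) : ℤ)) + ((σ i0 : ℕ) - a i0 : ℤ)
              ≤ ∑ i : Fin n, ((a i - (σ i : ℕ) : ℕ) : ℤ) := by
            rw [← Finset.sum_erase_add _ _ (Finset.mem_univ i0),
              ← Finset.sum_erase_add _ (fun i => ((a i - (σ i : ℕ) : ℕ) : ℤ))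
                (Finset.mem_univ i0)]
            have : ((a i0 - (σ i0 : ℕ) : ℕ) : ℤ) = 0 := by
              rw [Nat.sub_eq_zero_of_le hi0.le, Nat.cast_zero]
            rw [this]
            have hterm : ∀ i ∈ Finset.univ.erase i0,
                ((a i : ℤ) - ((σ i : ℕ) : ℤ)) ≤ ((a i - (σ i : ℕ) : ℕ) : ℤ) :=
              fun i _ => by omega
            have := Finset.sum_le_sum hterm
            omega
          have l' : ∑ i : Fin n, ((a i : ℤ)) - ∑ i : Fin n, (((σ i : ℕ)) : ℤ)
              + (((σ i0 : ℕ) : ℤ) - ((a i0 : ℕ) : ℤ))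
              ≤ ∑ i : Fin n, ((a i - (σ i : ℕ) : ℕ) : ℤ) := by
            rw [Finset.sum_sub_distrib] at l
            exact l
          rw [r, Finset.sum_sub_distrib, ← e2]
          omega
        exact X_pow_dvd_iff.mp hdvd w hgt
      rw [hzero, Finset.prod_eq_zero (Finset.mem_univ i0) (by rw [hrhs, mul_zero])]
  have hdet : ((wmat g).det).coeff w
      = (∏ i : Fin n, (g i).coeff (a i))
        * (Matrix.of fun i j : Fin n => ((a j).descFactorial (i : ℕ) : ℂ)).det := by
    rw [Matrix.det_apply, Polynomial.finset_sum_coeff]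
    rw [Matrix.det_apply]
    rw [Finset.mul_sum]
    refine Finset.sum_congr rfl fun σ _ => ?_
    rw [Polynomial.coeff_smul, hperm σ, Finset.prod_mul_distrib]
    rw [mul_smul_comm]
    rfl
  have hvdm : (Matrix.of fun i j : Fin n => ((a j).descFactorial (i : ℕ) : ℂ)).det ≠ 0 := by
    have heq : (Matrix.of fun i j : Fin n => ((a j).descFactorial (i : ℕ) : ℂ))
        = (Matrix.of fun i j : Fin n =>
            ((descPochhammer ℂ (j : ℕ)).eval ((a i : ℕ) : ℂ)))ᵀ := by
      apply Matrix.ext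
      intro i j
      simp only [Matrix.of_apply, Matrix.transpose_apply]
      rw [descPochhammer_eval_eq_descFactorial]
    rw [heq, Matrix.det_transpose,
      ← Matrix.det_eval_matrixOfPolynomials_eq_det_vandermonde
        (fun i : Fin n => ((a i : ℕ) : ℂ)) (fun j : Fin n => descPochhammer ℂ (j : ℕ))
        (fun j => descPochhammer_natDegree ℂ (j : ℕ))
        (fun j => monic_descPochhammer ℂ (j : ℕ))]
    rw [Matrix.det_vandermonde_ne_zero_iff]
    intro i j hij
    exact hsm.injective (Nat.cast_injective hij)
  intro h0
  rw [h0, Polynomial.coeff_zero] at hdet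
  exact (mul_ne_zero (Finset.prod_ne_zero_iff.mpr fun i _ => hcne i) hvdm) hdet.symm

/- ### Main theorem -/

/-- Plücker formula in genus 0: for an (r+1)-dimensional space V of polynomials
of degree ≤ d, with a(x) 0 < a(x) 1 < ⋯ < a(x) r the orders of vanishing at x of
nonzero elements of V and w(x) := ∑_j (a(x) j − j), we have w(x) ≥ 0 for all x,
w(x) = 0 for all but finitely many x, and ∑_x w(x) ≤ (r+1)d − r(r+1)/2. -/
theorem pluecker_genus_zero (r d : ℕ) (V : Submodule ℂ (Polynomial ℂ))
    [FiniteDimensional ℂ V] (hdim : Module.finrank ℂ V = r + 1)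
    (hdeg : ∀ f ∈ V, f.natDegree ≤ d)
    (a : ℂ → Fin (r + 1) → ℕ)
    (hmono : ∀ x : ℂ, StrictMono (a x))
    (hrange : ∀ x : ℂ,
      Set.range (a x) = {m : ℕ | ∃ f ∈ V, f ≠ 0 ∧ f.rootMultiplicity x = m}) :
    (∀ x : ℂ, 0 ≤ ∑ j : Fin (r + 1), ((a x j : ℤ) - (j : ℤ))) ∧
    ({x : ℂ | ∑ j : Fin (r + 1), ((a x j : ℤ) - (j : ℤ)) ≠ 0}).Finite ∧
    ∑ᶠ x : ℂ, (∑ j : Fin (r + 1), ((a x j : ℤ) - (j : ℤ))) ≤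
      ((r : ℤ) + 1) * (d : ℤ) - (r : ℤ) * ((r : ℤ) + 1) / 2 := by
  classical
  -- part 1 : nonnegativity
  have hja : ∀ x (j : Fin (r + 1)), (j : ℕ) ≤ a x j := fun x => fin_le_of_strictMono (hmono x)
  have part1 : ∀ x : ℂ, 0 ≤ ∑ j : Fin (r + 1), ((a x j : ℤ) - (j : ℤ)) := by
    intro x
    refine Finset.sum_nonneg fun j _ => ?_
    have := hja x j
    simp only [sub_nonneg]
    exact_mod_cast this
  -- adapted families
  have hex : ∀ x (j : Fin (r + 1)), ∃ f, f ∈ V ∧ f ≠ 0 ∧ f.rootMultiplicity x = a x j := by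
    intro x j
    have : a x j ∈ Set.range (a x) := ⟨j, rfl⟩
    rw [hrange x] at this
    obtain ⟨f, hf1, hf2, hf3⟩ := this
    exact ⟨f, hf1, hf2, hf3⟩
  set g : ℂ → Fin (r + 1) → Polynomial ℂ := fun x j => (hex x j).choose with hg
  have hgV : ∀ x j, g x j ∈ V := fun x j => (hex x j).choose_spec.1
  have hgne : ∀ x j, g x j ≠ 0 := fun x j => (hex x j).choose_spec.2.1
  have hgrm : ∀ x j, (g x j).rootMultiplicity x = a x j := fun x j =>
    (hex x j).choose_spec.2.2
  have hgli : ∀ x, LinearIndependent ℂ (g x) := by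
    intro x
    refine linearIndependent_of_strictMono_rootMultiplicity x (g x) (hgne x) ?_
    have : (fun j => (g x j).rootMultiplicity x) = a x := funext fun j => hgrm x j
    rw [this]
    exact hmono x
  -- the Wronskian
  set W : Polynomial ℂ := (wmat (g 0)).det with hW
  have hWne : W ≠ 0 := det_wmat_ne_zero (g 0) (a 0) (hmono 0) (hgne 0) (hgrm 0)
  -- basis of V from g 0
  have hli0 : LinearIndependent ℂ (fun j : Fin (r + 1) => (⟨g 0 j, hgV 0 j⟩ : V)) := by
    apply LinearIndependent.of_comp V.subtype
    exact hgli 0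
  have hcard : Fintype.card (Fin (r + 1)) = Module.finrank ℂ V := by
    rw [Fintype.card_fin, hdim]
  set b : Module.Basis (Fin (r + 1)) ℂ V := basisOfLinearIndependentOfCardEqFinrank hli0 hcard with hb
  have hbcoe : ∀ k, ((b k : V) : Polynomial ℂ) = g 0 k := by
    intro k
    rw [hb, coe_basisOfLinearIndependentOfCardEqFinrank]
  -- key inequality at each point
  set wN : ℂ → ℕ := fun x => ∑ j : Fin (r + 1), (a x j - (j : ℕ)) with hwN
  have hcast : ∀ x, (∑ j : Fin (r + 1), ((a x j : ℤ) - (j : ℤ))) = (wN x : ℤ) := by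
    intro x
    rw [hwN, Nat.cast_sum]
    exact Finset.sum_congr rfl fun j _ => by have := hja x j; omega
  have hkey : ∀ x : ℂ, wN x ≤ W.rootMultiplicity x := by
    intro x
    set c : Matrix (Fin (r + 1)) (Fin (r + 1)) ℂ := Matrix.of fun j k => b.repr ⟨g x j, hgV x j⟩ k
      with hc
    have hGsum : ∀ j, g x j = ∑ k : Fin (r + 1), c j k • g 0 k := by
      intro j
      have hsr := b.sum_repr ⟨g x j, hgV x j⟩
      have hcoe := congrArg (fun v : V => (v : Polynomial ℂ)) hsr
      simp only [Submodule.coe_sum, Submodule.coe_smul] at hcoe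
      rw [← hcoe]
      refine Finset.sum_congr rfl fun k _ => ?_
      rw [hbcoe k]
      rfl
    have hfac : (wmat (g x)).det = W * Polynomial.C c.det :=
      wmat_factor (g x) (g 0) c hGsum
    have hcdet : c.det ≠ 0 := by
      intro h0
      obtain ⟨v, hv0, hveq⟩ := (Matrix.exists_vecMul_eq_zero_iff).mpr h0
      have hdep : ∑ j : Fin (r + 1), v j • g x j = 0 := by
        have e : ∑ j : Fin (r + 1), v j • g x j
            = ∑ k : Fin (r + 1), (Matrix.vecMul v c k) • g 0 k := by
          simp_rw [hGsum, Finset.smul_sum, smul_smul]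
          rw [Finset.sum_comm]
          refine Finset.sum_congr rfl fun k _ => ?_
          rw [← Finset.sum_smul]
          congr 1
        rw [e, hveq]
        all_goals simp
      obtain ⟨j, hj⟩ := Function.ne_iff.mp hv0
      exact hj ((Fintype.linearIndependent_iff.mp (hgli x)) v hdep j)
    have hWGne : (wmat (g x)).det ≠ 0 := by
      rw [hfac]
      exact mul_ne_zero hWne (fun h => hcdet (by simpa using h))
    have hdvd : (X - Polynomial.C x) ^ (wN x) ∣ (wmat (g x)).det := by
      rw [hwN]
      refine pow_dvd_det_wmat x (g x) (a x) (hja x) fun i => ?_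
      rw [← hgrm x i]
      exact pow_rootMultiplicity_dvd _ _
    have h1 : wN x ≤ ((wmat (g x)).det).rootMultiplicity x :=
      (Polynomial.le_rootMultiplicity_iff hWGne).mpr hdvd
    have h2 : ((wmat (g x)).det).rootMultiplicity x = W.rootMultiplicity x := by
      rw [hfac, Polynomial.rootMultiplicity_mul (by rw [← hfac]; exact hWGne)]
      have : (Polynomial.C c.det).rootMultiplicity x = 0 :=
        Polynomial.rootMultiplicity_eq_zero (by simp [Polynomial.IsRoot, hcdet])
      rw [this, add_zero]
    rw [← h2]
    exact h1
  -- finiteness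
  have hsub : {x : ℂ | ∑ j : Fin (r + 1), ((a x j : ℤ) - (j : ℤ)) ≠ 0} ⊆ {x : ℂ | W.IsRoot x} := by
    intro x hx
    simp only [Set.mem_setOf_eq] at hx ⊢
    have h1 : wN x ≠ 0 := by
      intro h0
      apply hx
      rw [hcast x, h0, Nat.cast_zero]
    have h2 : 0 < W.rootMultiplicity x := lt_of_lt_of_le (Nat.pos_of_ne_zero h1) (hkey x)
    exact (Polynomial.rootMultiplicity_pos hWne).mp h2
  have part2 : ({x : ℂ | ∑ j : Fin (r + 1), ((a x j : ℤ) - (j : ℤ)) ≠ 0}).Finite :=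
    Set.Finite.subset (Polynomial.finite_setOf_isRoot hWne) hsub
  -- degree bound on W
  have hr_le_d : r ≤ d := by
    set j0 : Fin (r + 1) := ⟨r, Nat.lt_succ_self r⟩ with hj0
    have h1 : (j0 : ℕ) ≤ a 0 j0 := hja 0 j0
    have h2 : a 0 j0 ≤ (g 0 j0).natDegree := by
      rw [← hgrm 0 j0]
      have hd := Polynomial.natDegree_le_of_dvd
        (pow_rootMultiplicity_dvd (g 0 j0) 0) (hgne 0 j0)
      rwa [Polynomial.natDegree_pow, Polynomial.natDegree_X_sub_C, mul_one] at hd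
    have h3 : (g 0 j0).natDegree ≤ d := hdeg _ (hgV 0 j0)
    have : (j0 : ℕ) = r := rfl
    omega
  have hdegW : W.natDegree ≤ ∑ j : Fin (r + 1), (d - (j : ℕ)) := by
    rw [hW, Matrix.det_apply']
    refine Polynomial.natDegree_sum_le_of_forall_le _ _ fun σ _ => ?_
    refine le_trans Polynomial.natDegree_mul_le ?_
    rw [Polynomial.natDegree_intCast, zero_add]
    refine le_trans (Polynomial.natDegree_prod_le _ _) ?_
    have hterm : ∀ i : Fin (r + 1), (wmat (g 0) (σ i) i).natDegree ≤ d - (σ i : ℕ) := by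
      intro i
      refine le_trans (Polynomial.natDegree_iterate_derivative _ _) ?_
      exact Nat.sub_le_sub_right (hdeg _ (hgV 0 i)) _
    refine le_trans (Finset.sum_le_sum fun i _ => hterm i) ?_
    rw [Equiv.sum_comp σ (fun j : Fin (r + 1) => d - (j : ℕ))]
  -- root count
  have hsum_rm : ∑ x ∈ W.roots.toFinset, W.rootMultiplicity x ≤ W.natDegree := by
    calc ∑ x ∈ W.roots.toFinset, W.rootMultiplicity x
        = ∑ x ∈ W.roots.toFinset, W.roots.count x :=
          Finset.sum_congr rfl fun x _ => (Polynomial.count_roots W).symm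
      _ = Multiset.card W.roots := Multiset.toFinset_sum_count_eq W.roots
      _ ≤ W.natDegree := Polynomial.card_roots' W
  -- final sum
  have hsupp : Function.support (fun x : ℂ => ∑ j : Fin (r + 1), ((a x j : ℤ) - (j : ℤ)))
      ⊆ ↑W.roots.toFinset := by
    intro x hx
    simp only [Multiset.mem_toFinset, Finset.coe_sort_coe, Finset.mem_coe]
    rw [Polynomial.mem_roots hWne]
    exact hsub hx
  have hfin : ∑ᶠ x : ℂ, (∑ j : Fin (r + 1), ((a x j : ℤ) - (j : ℤ)))
      = ∑ x ∈ W.roots.toFinset, (∑ j : Fin (r + 1), ((a x j : ℤ) - (j : ℤ))) :=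
    finsum_eq_sum_of_support_subset _ hsupp
  -- arithmetic
  have hS2 : 2 * (∑ j : Fin (r + 1), ((j : ℕ) : ℤ)) = (r : ℤ) * ((r : ℤ) + 1) := by
    have h1 : ∑ j : Fin (r + 1), (j : ℕ) = ∑ i ∈ Finset.range (r + 1), i :=
      Fin.sum_univ_eq_sum_range (fun i => i) (r + 1)
    have h2 : (∑ i ∈ Finset.range (r + 1), i) * 2 = (r + 1) * ((r + 1) - 1) := Finset.sum_range_id_mul_two (r + 1)
    have h3 : ∑ j : Fin (r + 1), ((j : ℕ) : ℤ) = ((∑ j : Fin (r + 1), (j : ℕ) : ℕ) : ℤ) := by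
      rw [Nat.cast_sum]
    rw [h3, h1]
    have h5 : (r + 1) * ((r + 1) - 1) = (r + 1) * r := by rw [Nat.add_sub_cancel]
    rw [h5] at h2
    calc 2 * ((∑ i ∈ Finset.range (r + 1), i : ℕ) : ℤ)
        = (((∑ i ∈ Finset.range (r + 1), i) * 2 : ℕ) : ℤ) := by push_cast; ring
      _ = (((r + 1) * r : ℕ) : ℤ) := by rw [h2]
      _ = (r : ℤ) * ((r : ℤ) + 1) := by push_cast; ring
  have hDcast : ((∑ j : Fin (r + 1), (d - (j : ℕ)) : ℕ) : ℤ)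
      = ((r : ℤ) + 1) * (d : ℤ) - (∑ j : Fin (r + 1), ((j : ℕ) : ℤ)) := by
    rw [Nat.cast_sum]
    have h1 : ∀ j : Fin (r + 1), ((d - (j : ℕ) : ℕ) : ℤ) = (d : ℤ) - ((j : ℕ) : ℤ) := by
      intro j
      have : (j : ℕ) ≤ d := le_trans (Nat.lt_succ_iff.mp j.isLt) hr_le_d
      omega
    rw [Finset.sum_congr rfl fun j _ => h1 j, Finset.sum_sub_distrib]
    congr 1
    rw [Finset.sum_const, Finset.card_univ, Fintype.card_fin]
    push_cast [nsmul_eq_mul]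
    ring
  have hhalf : (r : ℤ) * ((r : ℤ) + 1) / 2 = ∑ j : Fin (r + 1), ((j : ℕ) : ℤ) := by
    rw [← hS2, Int.mul_ediv_cancel_left _ two_ne_zero]
  -- chain
  have chain : ∑ᶠ x : ℂ, (∑ j : Fin (r + 1), ((a x j : ℤ) - (j : ℤ)))
      ≤ ((∑ j : Fin (r + 1), (d - (j : ℕ)) : ℕ) : ℤ) := by
    rw [hfin]
    calc ∑ x ∈ W.roots.toFinset, (∑ j : Fin (r + 1), ((a x j : ℤ) - (j : ℤ)))
        ≤ ∑ x ∈ W.roots.toFinset, ((W.rootMultiplicity x : ℕ) : ℤ) := by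
          refine Finset.sum_le_sum fun x _ => ?_
          rw [hcast x]
          exact_mod_cast hkey x
      _ = ((∑ x ∈ W.roots.toFinset, W.rootMultiplicity x : ℕ) : ℤ) := by
          rw [Nat.cast_sum]
      _ ≤ (W.natDegree : ℤ) := by exact_mod_cast hsum_rm
      _ ≤ _ := by exact_mod_cast hdegW
  refine ⟨part1, part2, ?_⟩
  rw [hDcast] at chain
  rw [← hhalf] at chain
  exact chain
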